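/- Let Σ be a finite alphabet and let B be the quiver with three vertices ⊥, ∗, ⊤ and with edges: one edge bow : ⊥ ⟶ ∗, one edge e_a : ∗ ⟶ ∗ for each letter a ∈ Σ, and one edge eow : ∗ ⟶ ⊤. For a word w = a₁⋯aₙ ∈ List Σ, let ⌊w⌉ : ⊥ ⟶ ⊤ denote the morphism of Paths B given by the path bow, e_{a₁}, …, e_{aₙ}, eow. Then a language L ⊆ List Σ is regular in the classical sense (Language.IsRegular, i.e., accepted by a DFA with finitely many states) if and only if there exist a category Q, a finitary ULF functor p : Q ⥤ Paths B, and objects q₀, q_f of Q with p.obj q₀ = ⊥ and p.obj q_f = ⊤, such that the set of morphisms p.map α for α : q₀ ⟶ q_f equals { ⌊w⌉ | w ∈ L }. -/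

import Mathlib

open CategoryTheory

universe v u v' u'

/-- A functor `p : D ⥤ C` has the unique lifting of factorizations property (is ULF) if
every factorization of the image of a morphism lifts uniquely. -/
def IsULF {D : Type u} {C : Type u'} [Category.{v} D] [Category.{v'} C] (p : D ⥤ C) : Prop :=
  ∀ ⦃X Y : D⦄ (α : X ⟶ Y) ⦃B : C⦄ (u : p.obj X ⟶ B) (v : B ⟶ p.obj Y),
    p.map α = u ≫ v →
    ∃! t : Σ (Z : D), (X ⟶ Z) × (Z ⟶ Y),
      ∃ e : p.obj t.1 = B,
        t.2.1 ≫ t.2.2 = α ∧ p.map t.2.1 ≫ eqToHom e = u ∧ p.map t.2.2 = eqToHom e ≫ v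

/-- A functor `p : D ⥤ C` is finitary if its fibers over objects and over morphisms
are all finite. -/
def IsFinitary {D : Type u} {C : Type u'} [Category.{v} D] [Category.{v'} C]
    (p : D ⥤ C) : Prop :=
  (∀ A : C, { X : D | p.obj X = A }.Finite) ∧
    ∀ (A B : C) (w : A ⟶ B),
      { t : Σ (X : D) (Y : D), X ⟶ Y |
        ∃ (hX : p.obj t.1 = A) (hY : p.obj t.2.1 = B),
          p.map t.2.2 = eqToHom hX ≫ w ≫ eqToHom hY.symm }.Finite

/-- The vertices of the bracketing quiver: `⊥`, `∗` and `⊤`. -/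
inductive BV (σ : Type) : Type where
  | bot | star | top

/-- The edges of the bracketing quiver: one edge `bow : ⊥ ⟶ ∗`, an edge `∗ ⟶ ∗` for each
letter of `σ`, and one edge `eow : ∗ ⟶ ⊤`. -/
inductive BE (σ : Type) : BV σ → BV σ → Type where
  | bow : BE σ .bot .star
  | letter : σ → BE σ .star .star
  | eow : BE σ .star .top

instance (σ : Type) : Quiver (BV σ) := ⟨BE σ⟩

/-- The path `e_{a₁}, …, e_{aₙ} : ∗ ⟶ ∗` spelling out a word `a₁⋯aₙ`. -/
def wordPath {σ : Type} : List σ → Quiver.Path (BV.star : BV σ) BV.star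
  | [] => Quiver.Path.nil
  | a :: w => (Quiver.Path.cons Quiver.Path.nil (BE.letter a)).comp (wordPath w)

/-- The morphism `⌊w⌉ : ⊥ ⟶ ⊤` of `Paths (BV σ)` given by the path
`bow, e_{a₁}, …, e_{aₙ}, eow` for a word `w = a₁⋯aₙ`. -/
def bracket {σ : Type} (w : List σ) :
    ((Paths.of (BV σ)).obj (BV.bot : BV σ)) ⟶ ((Paths.of (BV σ)).obj BV.top) :=
  Quiver.Path.cons ((Quiver.Path.cons Quiver.Path.nil BE.bow).comp (wordPath w)) BE.eow

namespace RegAux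

open Quiver

variable {V : Type u} {W : Type u'} [Quiver.{v} V] [Quiver.{v'} W]

/-- The functor between path categories induced by a prefunctor. -/
def freeFunctor (F : V ⥤q W) : Paths V ⥤ Paths W where
  obj X := F.obj X
  map f := F.mapPath f
  map_id _ := rfl
  map_comp f g := F.mapPath_comp f g

@[simp] theorem freeFunctor_obj (F : V ⥤q W) (X : Paths V) :
    (freeFunctor F).obj X = F.obj X := rfl

@[simp] theorem freeFunctor_map (F : V ⥤q W) {X Y : Paths V} (f : X ⟶ Y) :
    (freeFunctor F).map f = F.mapPath f := rfl

theorem mapPath_length (F : V ⥤q W) : ∀ {a b : V} (p : Path a b),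
    (F.mapPath p).length = p.length
  | _, _, .nil => rfl
  | _, _, .cons p _ => congrArg Nat.succ (mapPath_length F p)

theorem path_split_unique {X : V} :
    ∀ {Z₁ Y : V} (γ₁ : Path Z₁ Y) {Z₂ : V} (β₁ : Path X Z₁) (β₂ : Path X Z₂)
      (γ₂ : Path Z₂ Y), β₁.comp γ₁ = β₂.comp γ₂ → γ₁.length = γ₂.length →
      Z₁ = Z₂ ∧ HEq β₁ β₂ ∧ HEq γ₁ γ₂ := by
  intro Z₁ Y γ₁
  induction γ₁ with
  | nil =>
    intro Z₂ β₁ β₂ γ₂ h hl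
    cases γ₂ with
    | nil => exact ⟨rfl, heq_of_eq (by simpa using h), HEq.rfl⟩
    | cons q e => simp at hl
  | cons q₁ f₁ ih =>
    intro Z₂ β₁ β₂ γ₂ h hl
    cases γ₂ with
    | nil => simp at hl
    | cons q₂ f₂ =>
      have h' : (β₁.comp q₁).cons f₁ = (β₂.comp q₂).cons f₂ := h
      obtain rfl := Quiver.Path.obj_eq_of_cons_eq_cons h'
      have h2 : β₁.comp q₁ = β₂.comp q₂ := eq_of_heq (Quiver.Path.heq_of_cons_eq_cons h')
      have hf : f₁ = f₂ := eq_of_heq (Quiver.Path.hom_heq_of_cons_eq_cons h')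
      obtain ⟨rfl, hβ, hq⟩ := ih β₁ β₂ q₂ h2 (by simpa using hl)
      exact ⟨rfl, hβ, heq_of_eq (by rw [eq_of_heq hq, hf])⟩

theorem eqToHom_length {a b : Paths V} (h : a = b) :
    (eqToHom h : a ⟶ b).length = 0 := by subst h; rfl

theorem hom_length_comp {a b c : Paths V} (f : a ⟶ b) (g : b ⟶ c) :
    (f ≫ g).length = f.length + g.length := Quiver.Path.length_comp f g

theorem cons_congr {x m y : V} {p q : Path x m} {e f : m ⟶ y}
    (hp : p = q) (he : e = f) : p.cons e = q.cons f := by rw [hp, he]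

/-- Existence part of ULF for free functors. -/
theorem exists_split (F : V ⥤q W) {X Y : Paths V} (α : X ⟶ Y) :
    ∀ {B : Paths W} (u : (freeFunctor F).obj X ⟶ B) (v : B ⟶ (freeFunctor F).obj Y),
      (freeFunctor F).map α = u ≫ v →
      ∃ (Z : Paths V) (β : X ⟶ Z) (γ : Z ⟶ Y) (e : (freeFunctor F).obj Z = B),
        β ≫ γ = α ∧ (freeFunctor F).map β ≫ eqToHom e = u ∧
          (freeFunctor F).map γ = eqToHom e ≫ v := by
  change Quiver.Path (V := V) X Y at α
  induction α with
  | nil =>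
    intro B u v h
    change Quiver.Path (V := W) B _ at v
    cases v with
    | nil =>
      have hu : u = Path.nil := (h : Path.nil = u.comp Path.nil).symm
      refine ⟨X, 𝟙 X, 𝟙 X, rfl, rfl, ?_, ?_⟩
      · rw [hu]; rfl
      · rfl
    | cons v' ev =>
      exact absurd (h : Path.nil = (u.comp v').cons ev) (Quiver.Path.nil_ne_cons _ _)
  | cons α' a ih =>
    intro B u v h
    change Quiver.Path (V := W) B _ at v
    cases v with
    | nil =>
      refine ⟨_, Path.cons α' a, 𝟙 _, rfl, rfl, ?_, rfl⟩
      have hu : u = F.mapPath (Path.cons α' a) := (h : _ = u.comp Path.nil).symm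
      rw [hu]; rfl
    | cons v' ev =>
      have h' : (F.mapPath α').cons (F.map a) = (u.comp v').cons ev := h
      obtain he := Quiver.Path.obj_eq_of_cons_eq_cons h'
      subst he
      have h2 : F.mapPath α' = u.comp v' :=
        eq_of_heq (Quiver.Path.heq_of_cons_eq_cons h')
      have hfa : F.map a = ev := eq_of_heq (Quiver.Path.hom_heq_of_cons_eq_cons h')
      obtain ⟨Z, β, γ, e, hc, hu, hv⟩ := ih u v' h2
      refine ⟨Z, β, Path.cons γ a, e, ?_, hu, ?_⟩
      · exact cons_congr (V := V) hc rfl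
      · exact cons_congr (V := W) hv hfa

theorem isULF_freeFunctor (F : V ⥤q W) : IsULF (freeFunctor F) := by
  intro X Y α B u v h
  obtain ⟨Z, β, γ, e, hc, hu, hv⟩ := exists_split F α u v h
  refine ⟨⟨Z, β, γ⟩, ⟨e, hc, hu, hv⟩, ?_⟩
  rintro ⟨Z', β', γ'⟩ ⟨e', hc', hu', hv'⟩
  have hlen : ∀ {Z₀ : Paths V} (γ₀ : Z₀ ⟶ Y) (e₀ : (freeFunctor F).obj Z₀ = B),
      (freeFunctor F).map γ₀ = eqToHom e₀ ≫ v →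
        Quiver.Path.length γ₀ = Quiver.Path.length v := by
    intro Z₀ γ₀ e₀ h₀
    have h1 := congrArg Quiver.Path.length h₀
    erw [freeFunctor_map, mapPath_length, hom_length_comp, eqToHom_length,
      Nat.zero_add] at h1
    exact h1
  obtain ⟨hZ, hβ, hγ⟩ := path_split_unique (V := V) (X := X) γ' β' β γ
    (hc'.trans hc.symm) ((hlen γ' e' hv').trans (hlen γ e hv).symm)
  subst hZ
  rw [eq_of_heq hβ, eq_of_heq hγ]

/-- The list of edges of a path, last edge first. -/
def edgeList {a : V} : ∀ {b : V}, Path a b → List (Σ x : V, Σ y : V, x ⟶ y)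
  | _, .nil => []
  | _, .cons p e => ⟨_, _, e⟩ :: edgeList p

theorem edgeList_length {a : V} : ∀ {b : V} (p : Path a b), (edgeList p).length = p.length
  | _, .nil => rfl
  | _, .cons p _ => congrArg Nat.succ (edgeList_length p)

theorem edgeList_inj : ∀ {a b : V} (p : Path a b) {c : V} (q : Path a c),
    edgeList p = edgeList q → b = c ∧ HEq p q := by
  intro a b p
  induction p with
  | nil =>
    intro c q h
    cases q with
    | nil => exact ⟨rfl, HEq.rfl⟩
    | cons q' f => simp [edgeList] at h
  | cons p' e ih =>
    intro c q h
    cases q with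
    | nil => simp [edgeList] at h
    | cons q' f =>
      simp only [edgeList] at h
      injection h with h1 h2
      injection h1 with hm h1
      subst hm
      have h1' := eq_of_heq h1
      injection h1' with hbc he
      subst hbc
      have he' := eq_of_heq he
      subst he'
      obtain ⟨hmm, hpq⟩ := ih q' h2
      exact ⟨rfl, heq_of_eq (cons_congr (eq_of_heq hpq) rfl)⟩

theorem isFinitary_freeFunctor (F : V ⥤q W) [Finite V]
    [Finite (Σ x : V, Σ y : V, x ⟶ y)] : IsFinitary (freeFunctor F) := by
  constructor
  · intro A
    have : Finite (Paths V) := ‹Finite V›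
    exact Set.toFinite _
  · intro A B w
    have hinj : Function.Injective
        (fun t : Σ X : Paths V, Σ Y : Paths V, X ⟶ Y => ((t.1 : V), edgeList t.2.2)) := by
      rintro ⟨X₁, Y₁, α₁⟩ ⟨X₂, Y₂, α₂⟩ h
      simp only [Prod.mk.injEq] at h
      obtain ⟨h1, h2⟩ := h
      subst h1
      obtain ⟨h3, h4⟩ := edgeList_inj α₁ α₂ h2
      subst h3
      rw [eq_of_heq h4]
    have hfin : ((Set.univ : Set V) ×ˢ
        { l : List (Σ x : V, Σ y : V, x ⟶ y) | l.length = Quiver.Path.length w }).Finite :=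
      Set.Finite.prod Set.finite_univ (List.finite_length_eq _ _)
    refine Set.Finite.subset (Set.Finite.preimage hinj.injOn hfin) ?_
    rintro ⟨X, Y, α⟩ ⟨hX, hY, hα⟩
    have h1 := congrArg Quiver.Path.length hα
    erw [freeFunctor_map, mapPath_length, hom_length_comp, hom_length_comp,
      eqToHom_length, eqToHom_length, Nat.zero_add, Nat.add_zero] at h1
    exact ⟨trivial, by erw [Set.mem_setOf_eq, edgeList_length]; exact h1⟩


end RegAux

namespace RegAux

open Quiver

section BVlemmas

variable {σ : Type}

theorem wordPath_append (w₁ w₂ : List σ) :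
    wordPath (w₁ ++ w₂) = (wordPath w₁).comp (wordPath w₂) := by
  induction w₁ with
  | nil => exact (Quiver.Path.nil_comp _).symm
  | cons a w₁ ih =>
    show (Quiver.Path.nil.cons (BE.letter a)).comp (wordPath (w₁ ++ w₂)) = _
    rw [ih, ← Quiver.Path.comp_assoc]
    rfl

/-- `bow` as a morphism of the path category. -/
def bowHom : ((Paths.of (BV σ)).obj (BV.bot : BV σ)) ⟶ (Paths.of (BV σ)).obj BV.star :=
  Quiver.Path.nil.cons BE.bow

/-- a letter as a morphism of the path category. -/
def letterHom (a : σ) : ((Paths.of (BV σ)).obj (BV.star : BV σ)) ⟶ (Paths.of (BV σ)).obj BV.star :=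
  Quiver.Path.nil.cons (BE.letter a)

/-- `eow` as a morphism of the path category. -/
def eowHom : ((Paths.of (BV σ)).obj (BV.star : BV σ)) ⟶ (Paths.of (BV σ)).obj BV.top :=
  Quiver.Path.nil.cons BE.eow

/-- a word as a morphism of the path category. -/
def wordHom (w : List σ) : ((Paths.of (BV σ)).obj (BV.star : BV σ)) ⟶ (Paths.of (BV σ)).obj BV.star :=
  wordPath w

theorem wordHom_nil : wordHom ([] : List σ) = 𝟙 _ := rfl

theorem wordHom_cons (a : σ) (w : List σ) :
    wordHom (a :: w) = letterHom a ≫ wordHom w := rfl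

theorem wordHom_append (w₁ w₂ : List σ) :
    wordHom (w₁ ++ w₂) = wordHom w₁ ≫ wordHom w₂ := wordPath_append w₁ w₂

theorem bracket_eq (w : List σ) : bracket w = bowHom ≫ wordHom w ≫ eowHom := rfl

end BVlemmas

section Forward

variable {σ S : Type} (M : DFA σ S)

/-- Vertices of the quiver of a DFA: `⊥`, one vertex per state, `⊤`. -/
inductive NV (M : DFA σ S) : Type where
  | bot | state (s : S) | top

/-- Edges of the quiver of a DFA. -/
inductive NE (M : DFA σ S) : NV M → NV M → Type where
  | bow : NE M .bot (.state M.start)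
  | letter (s : S) (a : σ) : NE M (.state s) (.state (M.step s a))
  | eow (s : S) (h : s ∈ M.accept) : NE M (.state s) .top

instance : Quiver (NV M) := ⟨NE M⟩

/-- The projection to the bracketing quiver. -/
def toBV : NV M ⥤q BV σ where
  obj x := match x with | .bot => .bot | .state _ => .star | .top => .top
  map e := match e with | .bow => BE.bow | .letter _ a => BE.letter a | .eow _ _ => BE.eow

/-- Encoding of the vertices of the DFA quiver. -/
def encV : NV M → Bool ⊕ S
  | .bot => .inl true
  | .state s => .inr s
  | .top => .inl false

theorem encV_inj : Function.Injective (encV M) := by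
  intro x y h
  cases x <;> cases y <;> simp_all [encV]

instance [Finite S] : Finite (NV M) := Finite.of_injective _ (encV_inj M)

/-- Encoding of the edges of the DFA quiver. -/
def encE : (Σ x : NV M, Σ y : NV M, x ⟶ y) → Bool ⊕ (S ⊕ S × σ)
  | ⟨_, _, .bow⟩ => .inl true
  | ⟨_, _, .letter s a⟩ => .inr (.inr (s, a))
  | ⟨_, _, .eow s _⟩ => .inr (.inl s)

theorem encE_inj : Function.Injective (encE M) := by
  rintro ⟨x, y, e⟩ ⟨x', y', e'⟩ h
  change NE M x y at e
  change NE M x' y' at e'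
  cases e with
  | bow =>
    cases e' with
    | bow => rfl
    | letter s a => simp [encE] at h
    | eow s hs => simp [encE] at h
  | letter s a =>
    cases e' with
    | bow => simp [encE] at h
    | letter s' a' =>
      simp only [encE, Sum.inr.injEq, Prod.mk.injEq] at h
      obtain ⟨rfl, rfl⟩ := h
      rfl
    | eow s' hs => simp [encE] at h
  | eow s hs =>
    cases e' with
    | bow => simp [encE] at h
    | letter s' a' => simp [encE] at h
    | eow s' hs' =>
      simp only [encE, Sum.inr.injEq, Sum.inl.injEq] at h
      subst h
      rfl

instance [Finite S] [Finite σ] : Finite (Σ x : NV M, Σ y : NV M, x ⟶ y) :=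
  Finite.of_injective _ (encE_inj M)

/-- Lift of a word to a path in the DFA quiver. -/
def liftWord (s : S) : ∀ (w : List σ),
    Quiver.Path (NV.state (M := M) s) (NV.state (M.evalFrom s w))
  | [] => .nil
  | a :: w => (Quiver.Path.nil.cons (NE.letter s a)).comp (liftWord (M.step s a) w)

theorem mapPath_liftWord (s : S) (w : List σ) :
    (toBV M).mapPath (liftWord M s w) = wordPath w := by
  induction w generalizing s with
  | nil => rfl
  | cons a w ih =>
    show (toBV M).mapPath
      ((Quiver.Path.nil.cons (NE.letter s a)).comp (liftWord M (M.step s a) w)) = _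
    rw [Prefunctor.mapPath_comp, ih]
    rfl

/-- Classification of the paths out of `⊥` in the DFA quiver. -/
def Spec : ∀ {y : NV M}, Quiver.Path (NV.bot : NV M) y → Prop
  | .bot, α => α = .nil
  | .state s, α => ∃ w : List σ, M.evalFrom M.start w = s ∧
      (toBV M).mapPath α = (Quiver.Path.nil.cons BE.bow).comp (wordPath w)
  | .top, α => ∃ w ∈ M.accepts,
      (toBV M).mapPath α = (bracket w : Quiver.Path (BV.bot : BV σ) BV.top)

theorem spec : ∀ {y : NV M} (α : Quiver.Path (NV.bot : NV M) y), Spec M α := by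
  intro y α
  induction α with
  | nil => rfl
  | cons p e ih =>
    change NE M _ _ at e
    cases e with
    | bow =>
      rw [show p = .nil from ih]
      exact ⟨[], rfl, rfl⟩
    | letter s a =>
      obtain ⟨w, hw, hmap⟩ := ih
      refine ⟨w ++ [a], ?_, ?_⟩
      · rw [DFA.evalFrom_append_singleton, hw]
      · rw [wordPath_append, ← Quiver.Path.comp_assoc]
        exact cons_congr hmap rfl
    | eow s hs =>
      obtain ⟨w, hw, hmap⟩ := ih
      refine ⟨w, ?_, cons_congr hmap rfl⟩
      rw [DFA.mem_accepts]
      show M.evalFrom M.start w ∈ M.accept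
      rw [hw]
      exact hs

theorem hom_set_eq {L : Language σ} (hL : M.accepts = L) :
    { m : (Paths.of (BV σ)).obj (BV.bot : BV σ) ⟶ (Paths.of (BV σ)).obj BV.top |
        ∃ α : (Paths.of (NV M)).obj (NV.bot : NV M) ⟶ (Paths.of (NV M)).obj (NV.top : NV M),
          (freeFunctor (toBV M)).map α = m } = { m | ∃ w ∈ L, m = bracket w } := by
  ext m
  constructor
  · rintro ⟨α, rfl⟩
    obtain ⟨w, hw, hmap⟩ := spec M (y := NV.top) α
    exact ⟨w, hL ▸ hw, hmap⟩
  · rintro ⟨w, hw, rfl⟩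
    rw [← hL] at hw
    have hs : M.evalFrom M.start w ∈ M.accept := (DFA.mem_accepts M).mp hw
    refine ⟨Quiver.Path.cons
      ((Quiver.Path.nil.cons NE.bow).comp (liftWord M M.start w)) (NE.eow _ hs), ?_⟩
    show ((toBV M).mapPath
      ((Quiver.Path.nil.cons NE.bow).comp (liftWord M M.start w))).cons BE.eow
      = (bracket w : Quiver.Path (BV.bot : BV σ) BV.top)
    refine cons_congr ?_ rfl
    rw [Prefunctor.mapPath_comp, mapPath_liftWord]
    rfl

end Forward



attribute [local instance] uliftCategory

section Lift

universe w₁ w₂ u₁ v₁ u₂ v₂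

variable {D : Type u₁} [Category.{v₁} D] {C : Type u₂} [Category.{v₂} C]

/-- Composition with the projection from the universe-lifted category. -/
def liftF (p₀ : D ⥤ C) : ULiftHom.{w₂} (ULift.{w₁} D) ⥤ C :=
  ULiftHom.down ⋙ ULift.downFunctor ⋙ p₀

theorem isULF_liftF {p₀ : D ⥤ C} (h : IsULF p₀) : IsULF (liftF.{w₁, w₂} p₀) := by
  intro X Y α B u v hf
  have h0 := h (X := X.objDown.down) (Y := Y.objDown.down) α.down u v hf
  let e : (Σ Z : ULiftHom.{w₂} (ULift.{w₁} D), (X ⟶ Z) × (Z ⟶ Y)) ≃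
      (Σ Z : D, (X.objDown.down ⟶ Z) × (Z ⟶ Y.objDown.down)) :=
    { toFun := fun t => ⟨t.1.objDown.down, t.2.1.down, t.2.2.down⟩
      invFun := fun t => ⟨ULiftHom.objUp (ULift.up t.1), ULift.up t.2.1, ULift.up t.2.2⟩
      left_inv := fun t => rfl
      right_inv := fun t => rfl }
  refine (e.existsUnique_congr ?_).mpr h0
  rintro ⟨Z, β, γ⟩
  constructor
  · rintro ⟨q, h1, h2, h3⟩
    exact ⟨q, congrArg ULift.down h1, h2, h3⟩
  · rintro ⟨q, h1, h2, h3⟩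
    exact ⟨q, ULift.down_injective h1, h2, h3⟩

theorem isFinitary_liftF {p₀ : D ⥤ C} (h : IsFinitary p₀) :
    IsFinitary (liftF.{w₁, w₂} p₀) := by
  constructor
  · intro A
    have hinj : Function.Injective
        (fun X : ULiftHom.{w₂} (ULift.{w₁} D) => X.objDown.down) :=
      fun a b hab => congrArg (fun x => ULiftHom.objUp (ULift.up x)) hab
    exact Set.Finite.preimage hinj.injOn (h.1 A)
  · intro A B w
    have hinv : Function.LeftInverse
        (fun t : Σ X : D, Σ Y : D, X ⟶ Y =>
          (⟨ULiftHom.objUp (ULift.up t.1), ULiftHom.objUp (ULift.up t.2.1),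
            ULift.up t.2.2⟩ :
            Σ X : ULiftHom.{w₂} (ULift.{w₁} D), Σ Y : ULiftHom.{w₂} (ULift.{w₁} D), X ⟶ Y))
        (fun t : Σ X : ULiftHom.{w₂} (ULift.{w₁} D), Σ Y : ULiftHom.{w₂} (ULift.{w₁} D), X ⟶ Y =>
          ⟨t.1.objDown.down, t.2.1.objDown.down, t.2.2.down⟩) := fun t => rfl
    exact Set.Finite.preimage hinv.injective.injOn (h.2 A B w)

end Lift

theorem forward {σ : Type} [Finite σ] {L : Language σ} (h : L.IsRegular) :
    ∃ (Q : Type u') (_ : Category.{v'} Q) (p : Q ⥤ Paths (BV σ)) (q₀ qf : Q)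
      (h₀ : p.obj q₀ = (Paths.of (BV σ)).obj BV.bot) (hf : p.obj qf = (Paths.of (BV σ)).obj BV.top),
      IsULF p ∧ IsFinitary p ∧
      { m : (Paths.of (BV σ)).obj (BV.bot : BV σ) ⟶ (Paths.of (BV σ)).obj BV.top |
          ∃ α : q₀ ⟶ qf, p.map α = eqToHom h₀ ≫ m ≫ eqToHom hf.symm } =
        { m | ∃ w ∈ L, m = bracket w } := by
  obtain ⟨S, fS, M, hM⟩ := h
  haveI := fS
  refine ⟨ULiftHom.{v'} (ULift.{u'} (Paths (NV M))), inferInstance,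
    liftF (freeFunctor (toBV M)),
    ULiftHom.objUp (ULift.up ((Paths.of (NV M)).obj (NV.bot : NV M))),
    ULiftHom.objUp (ULift.up ((Paths.of (NV M)).obj (NV.top : NV M))), rfl, rfl,
    isULF_liftF (isULF_freeFunctor _), isFinitary_liftF (isFinitary_freeFunctor _), ?_⟩
  rw [← hom_set_eq M hM]
  ext m
  simp only [Set.mem_setOf_eq, eqToHom_refl, Category.comp_id, Category.id_comp]
  constructor
  · rintro ⟨α, hα⟩
    refine ⟨α.down, ?_⟩
    erw [eqToHom_refl, eqToHom_refl, Category.id_comp, Category.comp_id] at hα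
    exact hα
  · rintro ⟨α, hα⟩
    refine ⟨ULift.up α, ?_⟩
    erw [eqToHom_refl, eqToHom_refl, Category.id_comp, Category.comp_id]
    exact hα


section Backward

theorem nfa_evalFrom_mono {α σ' : Type*} (M : NFA α σ') :
    ∀ (w : List α) {S T : Set σ'}, S ⊆ T → M.evalFrom S w ⊆ M.evalFrom T w := by
  intro w
  induction w with
  | nil => intro S T h; exact h
  | cons a w ih =>
    intro S T h
    refine ih ?_
    intro x hx
    rw [NFA.mem_stepSet] at hx ⊢
    obtain ⟨t, ht, hstep⟩ := hx
    exact ⟨t, h ht, hstep⟩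

variable {σ : Type}

theorem wordPath_length (w : List σ) : (wordPath (σ := σ) w).length = w.length := by
  induction w with
  | nil => rfl
  | cons a w ih =>
    show ((Quiver.Path.nil.cons (BE.letter a)).comp (wordPath w)).length = w.length + 1
    rw [Quiver.Path.length_comp, ih]
    show 1 + w.length = w.length + 1
    omega

theorem wordPath_injective : Function.Injective (wordPath (σ := σ)) := by
  intro w₁ w₂ h
  induction w₁ generalizing w₂ with
  | nil =>
    cases w₂ with
    | nil => rfl
    | cons b w₂ =>
      have := congrArg Quiver.Path.length h
      rw [wordPath_length, wordPath_length] at this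
      simp at this
  | cons a w₁ ih =>
    cases w₂ with
    | nil =>
      have := congrArg Quiver.Path.length h
      rw [wordPath_length, wordPath_length] at this
      simp at this
    | cons b w₂ =>
      have hl : (wordPath (σ := σ) w₁).length = (wordPath (σ := σ) w₂).length := by
        have := congrArg Quiver.Path.length h
        rw [wordPath_length, wordPath_length] at this
        rw [wordPath_length, wordPath_length]
        simpa using this
      obtain ⟨hz, hβ, hγ⟩ := path_split_unique (V := BV σ) (X := BV.star)
        (wordPath w₁) (Quiver.Path.nil.cons (BE.letter a))
        (Quiver.Path.nil.cons (BE.letter b)) (wordPath w₂) h hl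
      have hword : wordPath (σ := σ) w₁ = wordPath w₂ := eq_of_heq hγ
      have hab : a = b := by
        have hβ' := eq_of_heq hβ
        have hee := eq_of_heq (Quiver.Path.hom_heq_of_cons_eq_cons hβ')
        injection hee
      rw [hab, ih hword]

theorem bracket_injective : Function.Injective (bracket (σ := σ)) := by
  intro w₁ w₂ h
  have h' : ((Quiver.Path.nil.cons BE.bow).comp (wordPath w₁)).cons BE.eow
      = ((Quiver.Path.nil.cons BE.bow).comp (wordPath w₂)).cons BE.eow := h
  have h2 := eq_of_heq (Quiver.Path.heq_of_cons_eq_cons h')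
  exact wordPath_injective (Quiver.Path.comp_injective_right _ h2)

variable {Q : Type u'} [Category.{v'} Q] (p : Q ⥤ Paths (BV σ)) (q₀ qf : Q)
  (h₀ : p.obj q₀ = (Paths.of (BV σ)).obj BV.bot) (hf : p.obj qf = (Paths.of (BV σ)).obj BV.top)

/-- The state fiber of a functor to the bracketing path category. -/
abbrev St : Type u' := {X : Q // p.obj X = (Paths.of (BV σ)).obj (BV.star : BV σ)}

/-- The NFA extracted from a functor to the bracketing path category. -/
def theNFA : NFA σ (St p) where
  step s a := { s' | ∃ β : s.1 ⟶ s'.1,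
    p.map β = eqToHom s.2 ≫ letterHom a ≫ eqToHom s'.2.symm }
  start := { s | ∃ β : q₀ ⟶ s.1,
    p.map β = eqToHom h₀ ≫ bowHom ≫ eqToHom s.2.symm }
  accept := { s | ∃ γ : s.1 ⟶ qf,
    p.map γ = eqToHom s.2 ≫ eowHom ≫ eqToHom hf.symm }

theorem chop (hulf : IsULF p) :
    ∀ (w : List σ) (s : St p) (γ : s.1 ⟶ qf),
      p.map γ = eqToHom s.2 ≫ (wordHom w ≫ eowHom) ≫ eqToHom hf.symm →
      ∃ f ∈ (theNFA p q₀ qf h₀ hf).accept, f ∈ (theNFA p q₀ qf h₀ hf).evalFrom {s} w := by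
  intro w
  induction w with
  | nil =>
    intro s γ hγ
    refine ⟨s, ⟨γ, ?_⟩, rfl⟩
    rw [hγ, wordHom_nil, Category.id_comp]
  | cons a w ih =>
    intro s γ hγ
    have hfact : p.map γ =
        (eqToHom s.2 ≫ letterHom a) ≫ ((wordHom w ≫ eowHom) ≫ eqToHom hf.symm) := by
      rw [hγ, wordHom_cons]
      simp only [Category.assoc]
    obtain ⟨⟨Z, β, γ'⟩, ⟨e, hc, hu, hv⟩, -⟩ := hulf γ _ _ hfact
    dsimp only at hc hu hv
    have hβ : p.map β = eqToHom s.2 ≫ letterHom a ≫ eqToHom e.symm := by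
      rw [← Category.assoc, ← hu, Category.assoc, eqToHom_trans, eqToHom_refl,
        Category.comp_id]
    obtain ⟨f, hacc, hev⟩ := ih ⟨Z, e⟩ γ' (by rw [hv])
    refine ⟨f, hacc, ?_⟩
    refine nfa_evalFrom_mono _ w ?_ hev
    intro x hx
    rw [Set.mem_singleton_iff] at hx
    subst hx
    rw [NFA.mem_stepSet]
    exact ⟨s, rfl, β, hβ⟩

theorem reach (w : List σ) :
    ∀ s ∈ (theNFA p q₀ qf h₀ hf).evalFrom (theNFA p q₀ qf h₀ hf).start w,
      ∃ α : q₀ ⟶ s.1,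
        p.map α = eqToHom h₀ ≫ (bowHom ≫ wordHom w) ≫ eqToHom s.2.symm := by
  induction w using List.reverseRecOn with
  | nil =>
    intro s hs
    obtain ⟨β, hβ⟩ := hs
    refine ⟨β, ?_⟩
    rw [hβ, wordHom_nil, Category.comp_id]
  | append_singleton w a ih =>
    intro s hs
    rw [NFA.evalFrom_append, NFA.evalFrom_singleton, NFA.mem_stepSet] at hs
    obtain ⟨s', hs', β, hβ⟩ := hs
    obtain ⟨α₀, hα₀⟩ := ih s' hs'
    refine ⟨α₀ ≫ β, ?_⟩
    rw [Functor.map_comp, hα₀, hβ, wordHom_append, wordHom_cons, wordHom_nil]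
    simp only [Category.assoc, Category.comp_id, eqToHom_trans_assoc, eqToHom_refl,
      Category.id_comp]

theorem accepts_eq (hulf : IsULF p) {L : Language σ}
    (hset : { m : (Paths.of (BV σ)).obj (BV.bot : BV σ) ⟶ (Paths.of (BV σ)).obj BV.top |
        ∃ α : q₀ ⟶ qf, p.map α = eqToHom h₀ ≫ m ≫ eqToHom hf.symm } =
      { m | ∃ w ∈ L, m = bracket w }) :
    (theNFA p q₀ qf h₀ hf).accepts = L := by
  ext w
  rw [NFA.mem_accepts]
  constructor
  · rintro ⟨f, hacc, heval⟩
    obtain ⟨α₀, hα₀⟩ := reach p q₀ qf h₀ hf w f heval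
    obtain ⟨γ, hγ⟩ := hacc
    have hmem : bracket w ∈ { m : (Paths.of (BV σ)).obj (BV.bot : BV σ) ⟶ (Paths.of (BV σ)).obj BV.top |
        ∃ α : q₀ ⟶ qf, p.map α = eqToHom h₀ ≫ m ≫ eqToHom hf.symm } := by
      refine ⟨α₀ ≫ γ, ?_⟩
      rw [Functor.map_comp, hα₀, hγ, bracket_eq]
      simp only [Category.assoc, eqToHom_trans_assoc, eqToHom_refl, Category.id_comp]
    rw [hset] at hmem
    obtain ⟨w', hw', heq⟩ := hmem
    obtain rfl := bracket_injective heq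
    exact hw'
  · intro hw
    have hmem : bracket w ∈ { m : (Paths.of (BV σ)).obj (BV.bot : BV σ) ⟶ (Paths.of (BV σ)).obj BV.top |
        ∃ α : q₀ ⟶ qf, p.map α = eqToHom h₀ ≫ m ≫ eqToHom hf.symm } := by
      rw [hset]
      exact ⟨w, hw, rfl⟩
    obtain ⟨α, hα⟩ := hmem
    have hfact : p.map α =
        (eqToHom h₀ ≫ bowHom) ≫ ((wordHom w ≫ eowHom) ≫ eqToHom hf.symm) := by
      rw [hα, bracket_eq]
      simp only [Category.assoc]
    obtain ⟨⟨Z, β, γ⟩, ⟨e, hc, hu, hv⟩, -⟩ := hulf α _ _ hfact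
    dsimp only at hc hu hv
    have hβ : p.map β = eqToHom h₀ ≫ bowHom ≫ eqToHom e.symm := by
      rw [← Category.assoc, ← hu, Category.assoc, eqToHom_trans, eqToHom_refl,
        Category.comp_id]
    obtain ⟨f, hacc, hev⟩ := chop p q₀ qf h₀ hf hulf w ⟨Z, e⟩ γ (by rw [hv])
    refine ⟨f, hacc, ?_⟩
    refine nfa_evalFrom_mono _ w ?_ hev
    intro x hx
    rw [Set.mem_singleton_iff] at hx
    subst hx
    exact ⟨β, hβ⟩

theorem backward {L : Language σ} (hulf : IsULF p) (hfin : IsFinitary p)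
    (hset : { m : (Paths.of (BV σ)).obj (BV.bot : BV σ) ⟶ (Paths.of (BV σ)).obj BV.top |
        ∃ α : q₀ ⟶ qf, p.map α = eqToHom h₀ ≫ m ≫ eqToHom hf.symm } =
      { m | ∃ w ∈ L, m = bracket w }) :
    L.IsRegular := by
  haveI hfinSt : Finite (St p) := (hfin.1 ((Paths.of (BV σ)).obj BV.star)).to_subtype
  haveI : Finite (Set (St p)) := inferInstance
  obtain ⟨n, ⟨g⟩⟩ := Finite.exists_equiv_fin (Set (St p))
  refine ⟨Fin n, Fintype.ofFinite _, DFA.reindex g ((theNFA p q₀ qf h₀ hf).toDFA), ?_⟩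
  rw [DFA.accepts_reindex, NFA.toDFA_correct]
  exact accepts_eq p q₀ qf h₀ hf hulf hset

end Backward

end RegAux


/-- A language `L ⊆ List σ` over a finite alphabet is regular in the classical sense iff
`⌊L⌉ = { ⌊w⌉ | w ∈ L }` is the language of arrows recognized by a nondeterministic
finite-state automaton (a finitary ULF functor with chosen states) over `Paths (BV σ)`. -/
theorem language_isRegular_iff_nfa {σ : Type} [Finite σ] (L : Language σ) :
    L.IsRegular ↔
      ∃ (Q : Type u') (_ : Category.{v'} Q) (p : Q ⥤ Paths (BV σ)) (q₀ qf : Q)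
        (h₀ : p.obj q₀ = (Paths.of (BV σ)).obj BV.bot) (hf : p.obj qf = (Paths.of (BV σ)).obj BV.top),
        IsULF p ∧ IsFinitary p ∧
        { m : (Paths.of (BV σ)).obj (BV.bot : BV σ) ⟶ (Paths.of (BV σ)).obj BV.top |
            ∃ α : q₀ ⟶ qf, p.map α = eqToHom h₀ ≫ m ≫ eqToHom hf.symm } =
          { m | ∃ w ∈ L, m = bracket w } := by
  constructor
  · intro h
    exact RegAux.forward h
  · rintro ⟨Q, _, p, q₀, qf, h₀, hf, hulf, hfin, hset⟩
    exact RegAux.backward p q₀ qf h₀ hf hulf hfin hset
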